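/- Let d ≥ 1 and let q : ℝ^d × ℝ^d → ℂ (with Re q ≥ 0) be such that S(ξ) := sup_{x∈ℝ^d} |q(x,ξ)| and I(ξ) := inf_{x∈ℝ^d} Re q(x,ξ) are Borel measurable. Define the Pruitt indices β := sup{α ≥ 0 : lim_{|ξ|→0} S(ξ)/|ξ|^α = 0} and δ := sup{α ≥ 0 : lim_{|ξ|→0} I(ξ)/|ξ|^α = 0}. Then: (i) if d = 1 and β > 1, then ∫_{{|ξ|<r}} dξ / S(ξ) = ∞ for every r > 0; (ii) if ∫_{{|ξ|<r}} dξ / I(ξ) < ∞ for some r > 0, then for every α ≥ d it is not the case that lim_{|ξ|→0} I(ξ)/|ξ|^α = 0; in particular δ ≤ d. -/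

import Mathlib

open MeasureTheory Filter Topology Metric
open scoped ENNReal

lemma key_div (d : ℕ) (hd : 1 ≤ d) (α : ℝ) (hα : (d : ℝ) ≤ α) (ρ : ℝ) (hρ : 0 < ρ) :
    ∫⁻ ξ in Metric.ball (0 : EuclideanSpace ℝ (Fin d)) ρ,
      (ENNReal.ofReal (‖ξ‖ ^ α))⁻¹ = ∞ := by
  set E := EuclideanSpace ℝ (Fin d)
  haveI : Nonempty (Fin d) := ⟨⟨0, hd⟩⟩
  haveI : Nontrivial E := inferInstance
  set c : ℝ≥0∞ := volume (ball (0 : E) 1) with hc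
  have hc0 : 0 < c := measure_ball_pos _ _ one_pos
  have hctop : c ≠ ∞ := measure_ball_lt_top.ne
  -- radii
  set t : ℕ → ℝ := fun n => ρ * (1 / 2) ^ n with ht
  have htpos : ∀ n, 0 < t n := fun n => by positivity
  have htsucc : ∀ n, t (n + 1) = t n / 2 := fun n => by
    simp [ht, pow_succ]; ring_nf
  have hαpos : 0 ≤ α := le_trans (by exact_mod_cast Nat.zero_le d) hα
  -- volume of balls
  have hvol : ∀ n, volume (ball (0 : E) (t n)) = ENNReal.ofReal (t n ^ d) * c := by
    intro n
    rw [Measure.addHaar_ball volume (0 : E) (htpos n).le, finrank_euclideanSpace_fin]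
  -- the uniform lower bound per annulus
  set ε : ℝ≥0∞ := ENNReal.ofReal (ρ ^ ((d : ℝ) - α) * (1 - (1 / 2) ^ d)) * c with hε
  have hhalf : (0:ℝ) < 1 - (1 / 2) ^ d := by
    have : ((1:ℝ) / 2) ^ d < 1 := pow_lt_one₀ (by norm_num) (by norm_num) (by omega)
    linarith
  have hε0 : ε ≠ 0 := by
    apply mul_ne_zero _ hc0.ne'
    rw [Ne, ENNReal.ofReal_eq_zero, not_le]
    positivity
  set g : E → ℝ≥0∞ := fun ξ => (ENNReal.ofReal (‖ξ‖ ^ α))⁻¹ with hg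
  set J : ℕ → ℝ≥0∞ := fun n => ∫⁻ ξ in ball (0 : E) (t n), g ξ with hJ
  -- annulus lower bound
  have hstep : ∀ n, ε + J (n + 1) ≤ J n := by
    intro n
    have hsub : ball (0 : E) (t (n + 1)) ⊆ ball (0 : E) (t n) := by
      apply ball_subset_ball
      rw [htsucc n]
      linarith [htpos n]
    have hA : ∫⁻ ξ in ball (0 : E) (t n) \ ball (0 : E) (t (n + 1)), g ξ ≥ ε := by
      have hbd : ∀ ξ ∈ ball (0 : E) (t n) \ ball (0 : E) (t (n + 1)),
          (ENNReal.ofReal ((t n) ^ α))⁻¹ ≤ g ξ := by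
        rintro ξ ⟨h1, _⟩
        apply ENNReal.inv_le_inv.2
        apply ENNReal.ofReal_le_ofReal
        exact Real.rpow_le_rpow (norm_nonneg _) (le_of_lt (mem_ball_zero_iff.1 h1)) hαpos
      have hmono := setLIntegral_mono' (μ := volume) (f := fun _ => (ENNReal.ofReal ((t n) ^ α))⁻¹)
        ((measurableSet_ball).diff measurableSet_ball) hbd
      rw [setLIntegral_const] at hmono
      refine le_trans ?_ hmono
      have hmeasA : volume (ball (0 : E) (t n) \ ball (0 : E) (t (n + 1)))
          = ENNReal.ofReal (t n ^ d) * c - ENNReal.ofReal (t (n+1) ^ d) * c := by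
        rw [measure_diff hsub measurableSet_ball.nullMeasurableSet
          (by rw [hvol]; exact ENNReal.mul_ne_top ENNReal.ofReal_ne_top hctop), hvol, hvol]
      rw [hmeasA]
      -- compute the lower bound
      have h2 : ENNReal.ofReal (t n ^ d) * c - ENNReal.ofReal (t (n+1) ^ d) * c
          = ENNReal.ofReal (t n ^ d * (1 - (1/2) ^ d)) * c := by
        rw [← ENNReal.sub_mul (fun _ _ => hctop), ← ENNReal.ofReal_sub _ (by positivity)]
        congr 2
        rw [htsucc n, div_pow]
        ring_nf
        rw [one_div]
      rw [h2, ← mul_assoc]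
      apply mul_le_mul_left _ c
      rw [← ENNReal.ofReal_inv_of_pos (Real.rpow_pos_of_pos (htpos n) α),
        ← ENNReal.ofReal_mul (by positivity)]
      apply ENNReal.ofReal_le_ofReal
      have hrw : (t n ^ α)⁻¹ * (t n ^ d * (1 - (1/2) ^ d))
          = t n ^ ((d:ℝ) - α) * (1 - (1/2) ^ d) := by
        rw [Real.rpow_sub (htpos n), ← Real.rpow_natCast (t n) d]
        field_simp
      rw [hrw]
      apply mul_le_mul_of_nonneg_right _ hhalf.le
      apply Real.rpow_le_rpow_of_nonpos (htpos n) _ (by linarith)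
      calc t n = ρ * (1/2)^n := rfl
        _ ≤ ρ * 1 := by
            apply mul_le_mul_of_nonneg_left _ hρ.le
            exact pow_le_one₀ (by norm_num) (by norm_num)
        _ = ρ := mul_one ρ
    calc ε + J (n + 1)
        ≤ (∫⁻ ξ in ball (0 : E) (t n) \ ball (0 : E) (t (n + 1)), g ξ) + J (n+1) :=
          add_le_add_left hA _
      _ = ∫⁻ ξ in (ball (0 : E) (t n) \ ball (0 : E) (t (n + 1))) ∪ ball (0 : E) (t (n+1)),
            g ξ := (lintegral_union measurableSet_ball Set.disjoint_sdiff_left).symm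
      _ = J n := by rw [Set.diff_union_of_subset hsub]
  have hiter : ∀ n : ℕ, (n : ℝ≥0∞) * ε + J n ≤ J 0 := by
    intro n
    induction n with
    | zero => simp
    | succ k ih =>
      calc ((k + 1 : ℕ) : ℝ≥0∞) * ε + J (k + 1) = (k : ℝ≥0∞) * ε + (ε + J (k + 1)) := by
            push_cast; ring
        _ ≤ (k : ℝ≥0∞) * ε + J k := add_le_add_right (hstep k) _
        _ ≤ J 0 := ih
  have htop : J 0 = ∞ := by
    rw [eq_top_iff]
    have : (⨆ n : ℕ, (n : ℝ≥0∞) * ε) ≤ J 0 :=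
      iSup_le fun n => le_trans le_self_add (hiter n)
    refine le_trans ?_ this
    rw [← ENNReal.iSup_mul, ENNReal.iSup_natCast, ENNReal.top_mul hε0]
  have ht0 : t 0 = ρ := by simp [ht]
  rw [← ht0]
  exact htop

lemma int_top_of_tendsto (d : ℕ) (hd : 1 ≤ d) (f : EuclideanSpace ℝ (Fin d) → ℝ≥0∞)
    (hf : Measurable f) (α : ℝ) (hα : (d : ℝ) ≤ α)
    (h : Tendsto (fun ξ => f ξ / ENNReal.ofReal (‖ξ‖ ^ α))
      (𝓝[≠] (0 : EuclideanSpace ℝ (Fin d))) (𝓝 0))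
    (r : ℝ) (hr : 0 < r) :
    ∫⁻ ξ in Metric.ball (0 : EuclideanSpace ℝ (Fin d)) r, (f ξ)⁻¹ = ∞ := by
  have hev : ∀ᶠ ξ in 𝓝[≠] (0 : EuclideanSpace ℝ (Fin d)), f ξ / ENNReal.ofReal (‖ξ‖ ^ α) < 1 :=
    h.eventually_lt_const (by norm_num)
  rw [eventually_iff, Metric.mem_nhdsWithin_iff] at hev
  obtain ⟨ε, hε, hsub⟩ := hev
  set ρ := min r ε with hρdef
  have hρ : 0 < ρ := lt_min hr hε
  have hptw : ∀ ξ ∈ ball (0 : EuclideanSpace ℝ (Fin d)) ρ \ {0}, (ENNReal.ofReal (‖ξ‖ ^ α))⁻¹ ≤ (f ξ)⁻¹ := by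
    rintro ξ ⟨h1, h2⟩
    have hξ0 : ξ ≠ 0 := h2
    have hnorm : 0 < ‖ξ‖ := norm_pos_iff.2 hξ0
    have hb0 : ENNReal.ofReal (‖ξ‖ ^ α) ≠ 0 := by
      rw [Ne, ENNReal.ofReal_eq_zero, not_le]
      positivity
    have hmem : ξ ∈ ball (0 : EuclideanSpace ℝ (Fin d)) ε ∩ {(0 : EuclideanSpace ℝ (Fin d))}ᶜ :=
      ⟨ball_subset_ball (min_le_right r ε) h1, h2⟩
    have hlt : f ξ / ENNReal.ofReal (‖ξ‖ ^ α) < 1 := hsub hmem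
    have hle : f ξ ≤ ENNReal.ofReal (‖ξ‖ ^ α) := by
      have := (ENNReal.div_lt_iff (Or.inl hb0) (Or.inl ENNReal.ofReal_ne_top)).1 hlt
      rw [one_mul] at this
      exact this.le
    exact ENNReal.inv_le_inv.2 hle
  haveI : Nonempty (Fin d) := ⟨⟨0, hd⟩⟩
  haveI : Nontrivial (EuclideanSpace ℝ (Fin d)) := inferInstance
  have hae : (ball (0 : EuclideanSpace ℝ (Fin d)) ρ \ {0} : Set (EuclideanSpace ℝ (Fin d))) =ᵐ[volume] ball (0 : EuclideanSpace ℝ (Fin d)) ρ :=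
    diff_ae_eq_self.2 (measure_mono_null Set.inter_subset_right (measure_singleton 0))
  have h1 : ∫⁻ ξ in ball (0 : EuclideanSpace ℝ (Fin d)) ρ, (ENNReal.ofReal (‖ξ‖ ^ α))⁻¹ = ∞ :=
    key_div d hd α hα ρ hρ
  rw [← setLIntegral_congr hae] at h1
  rw [eq_top_iff, ← h1]
  calc ∫⁻ ξ in ball (0 : EuclideanSpace ℝ (Fin d)) ρ \ {0}, (ENNReal.ofReal (‖ξ‖ ^ α))⁻¹
      ≤ ∫⁻ ξ in ball (0 : EuclideanSpace ℝ (Fin d)) ρ \ {0}, (f ξ)⁻¹ := setLIntegral_mono hf.inv hptw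
    _ ≤ ∫⁻ ξ in ball (0 : EuclideanSpace ℝ (Fin d)) r, (f ξ)⁻¹ := by
        apply lintegral_mono_set
        exact Set.diff_subset.trans (ball_subset_ball (min_le_left r ε))

/-- Pruitt indices and the Chung–Fuchs conditions. -/
theorem stmt5 (d : ℕ) (hd : 1 ≤ d)
    (q : EuclideanSpace ℝ (Fin d) → EuclideanSpace ℝ (Fin d) → ℂ)
    (hre : ∀ x ξ, 0 ≤ (q x ξ).re)
    (hSmeas : Measurable fun ξ : EuclideanSpace ℝ (Fin d) =>
      ⨆ x, ENNReal.ofReal (‖q x ξ‖))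
    (hImeas : Measurable fun ξ : EuclideanSpace ℝ (Fin d) =>
      ⨅ x, ENNReal.ofReal ((q x ξ).re))
    (β δ : ℝ≥0∞)
    (hβ : β = ⨆ (α : ℝ) (_ : 0 ≤ α)
      (_ : Tendsto
        (fun ξ => (⨆ x, ENNReal.ofReal (‖q x ξ‖)) / ENNReal.ofReal (‖ξ‖ ^ α))
        (𝓝[≠] (0 : EuclideanSpace ℝ (Fin d))) (𝓝 0)), ENNReal.ofReal α)
    (hδ : δ = ⨆ (α : ℝ) (_ : 0 ≤ α)
      (_ : Tendsto
        (fun ξ => (⨅ x, ENNReal.ofReal ((q x ξ).re)) / ENNReal.ofReal (‖ξ‖ ^ α))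
        (𝓝[≠] (0 : EuclideanSpace ℝ (Fin d))) (𝓝 0)), ENNReal.ofReal α) :
    -- (i)
    ((d = 1) → (1 : ℝ≥0∞) < β →
      ∀ r > (0 : ℝ), ∫⁻ ξ in Metric.ball (0 : EuclideanSpace ℝ (Fin d)) r,
        (⨆ x, ENNReal.ofReal (‖q x ξ‖))⁻¹ = ∞) ∧
    -- (ii)
    ((∃ r > (0 : ℝ), ∫⁻ ξ in Metric.ball (0 : EuclideanSpace ℝ (Fin d)) r,
        (⨅ x, ENNReal.ofReal ((q x ξ).re))⁻¹ < ∞) →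
      (∀ α : ℝ, (d : ℝ) ≤ α →
        ¬ Tendsto
          (fun ξ => (⨅ x, ENNReal.ofReal ((q x ξ).re)) / ENNReal.ofReal (‖ξ‖ ^ α))
          (𝓝[≠] (0 : EuclideanSpace ℝ (Fin d))) (𝓝 0)) ∧
      δ ≤ (d : ℝ≥0∞)) := by
  constructor
  · intro hd1 hβ1 r hr
    subst hd1
    rw [hβ] at hβ1
    obtain ⟨α, hα⟩ := lt_iSup_iff.mp hβ1
    obtain ⟨hα0, hα2⟩ := lt_iSup_iff.mp hα
    obtain ⟨htend, hα3⟩ := lt_iSup_iff.mp hα2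
    have hα1 : 1 < α := ENNReal.one_lt_ofReal.1 hα3
    exact int_top_of_tendsto 1 le_rfl _ hSmeas α (by push_cast; linarith) htend r hr
  · rintro ⟨r, hr, hfin⟩
    have hmain : ∀ α : ℝ, (d : ℝ) ≤ α →
        ¬ Tendsto
          (fun ξ => (⨅ x, ENNReal.ofReal ((q x ξ).re)) / ENNReal.ofReal (‖ξ‖ ^ α))
          (𝓝[≠] (0 : EuclideanSpace ℝ (Fin d))) (𝓝 0) := by
      intro α hα ht
      rw [int_top_of_tendsto d hd _ hImeas α hα ht r hr] at hfin
      exact absurd hfin (by simp)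
    refine ⟨hmain, ?_⟩
    rw [hδ]
    refine iSup_le fun α => iSup_le fun hα0 => iSup_le fun ht => ?_
    have hαd : α < (d : ℝ) := lt_of_not_ge fun h => hmain α h ht
    calc ENNReal.ofReal α ≤ ENNReal.ofReal (d : ℝ) := ENNReal.ofReal_le_ofReal hαd.le
      _ = (d : ℝ≥0∞) := ENNReal.ofReal_natCast d
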